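/- Let f and g belong to the real disc algebra A_ℝ(D). Then the pair (f,g) is invertible in A_ℝ(D) (i.e., there exist α, β ∈ A_ℝ(D) with αf + βg = 1) if and only if there exists δ > 0 such that |f(z)| + |g(z)| ≥ δ for all z in the closed unit disc. -/

import Mathlib

open Complex Metric ComplexConjugate
set_option maxHeartbeats 1000000
set_option synthInstance.maxHeartbeats 100000

/-- The real disc algebra `A_ℝ(D)`: functions continuous on the closed unit disc,
holomorphic on the open unit disc, satisfying `f z = conj (f (conj z))` on the closed disc. -/
def IsRDisc (f : ℂ → ℂ) : Prop :=
  ContinuousOn f (closedBall (0 : ℂ) 1) ∧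
  DifferentiableOn ℂ f (ball (0 : ℂ) 1) ∧
  ∀ z ∈ closedBall (0 : ℂ) 1, f z = conj (f (conj z))

/-- A unit of `A_ℝ(D)`: a member of the algebra with no zeros on the closed unit disc. -/
def IsRDiscUnit (f : ℂ → ℂ) : Prop :=
  IsRDisc f ∧ ∀ z ∈ closedBall (0 : ℂ) 1, f z ≠ 0

/-- The pair `(f, g)` is invertible in `A_ℝ(D)`: there are `α, β` in the algebra with
`α f + β g = 1` on the closed unit disc. -/
def BezoutPair (f g : ℂ → ℂ) : Prop :=
  ∃ α β : ℂ → ℂ, IsRDisc α ∧ IsRDisc β ∧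
    ∀ z ∈ closedBall (0 : ℂ) 1, α z * f z + β z * g z = 1

/-- The pairs `(f₁,g₁)` and `(f₂,g₂)` are sign-linked. -/
def SignLinked (f₁ g₁ f₂ g₂ : ℂ → ℂ) : Prop :=
  ∀ x y : ℝ, x ∈ Set.Icc (-1 : ℝ) 1 → y ∈ Set.Icc (-1 : ℝ) 1 →
    f₁ (x : ℂ) * g₂ (x : ℂ) - f₂ (x : ℂ) * g₁ (x : ℂ) = 0 →
    f₁ (y : ℂ) * g₂ (y : ℂ) - f₂ (y : ℂ) * g₁ (y : ℂ) = 0 →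
    ∀ lam mu : ℝ,
      f₂ (x : ℂ) = (lam : ℂ) * f₁ (x : ℂ) → g₂ (x : ℂ) = (lam : ℂ) * g₁ (x : ℂ) →
      f₂ (y : ℂ) = (mu : ℂ) * f₁ (y : ℂ) → g₂ (y : ℂ) = (mu : ℂ) * g₁ (y : ℂ) →
      0 < lam * mu

/-- `f` has constant sign on the real zeros of `g`: the (real) values `f x` over
`x ∈ [-1,1]` with `g x = 0` are either all positive or all negative. -/
def ConstSignOnRealZeros (f g : ℂ → ℂ) : Prop :=
  (∀ x ∈ Set.Icc (-1 : ℝ) 1, g (x : ℂ) = 0 → 0 < (f (x : ℂ)).re) ∨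
  (∀ x ∈ Set.Icc (-1 : ℝ) 1, g (x : ℂ) = 0 → (f (x : ℂ)).re < 0)

noncomputable section CoronaAux

instance : CompactSpace (closedBall (0:ℂ) 1) :=
  isCompact_iff_compactSpace.mp (isCompact_closedBall 0 1)

instance : Nonempty (closedBall (0:ℂ) 1) := ⟨⟨0, mem_closedBall_self zero_le_one⟩⟩

open Classical in
/-- Extension of a continuous map on the closed disc to all of `ℂ` (by zero). -/
def cext (f : C(closedBall (0:ℂ) 1, ℂ)) : ℂ → ℂ :=
  fun z => if h : z ∈ closedBall (0:ℂ) 1 then f ⟨z, h⟩ else 0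

lemma cext_eq (f : C(closedBall (0:ℂ) 1, ℂ)) {z : ℂ} (h : z ∈ closedBall (0:ℂ) 1) :
    cext f z = f ⟨z, h⟩ := dif_pos h

lemma continuousOn_cext (f : C(closedBall (0:ℂ) 1, ℂ)) :
    ContinuousOn (cext f) (closedBall (0:ℂ) 1) := by
  rw [continuousOn_iff_continuous_restrict]
  have : (closedBall (0:ℂ) 1).domRestrict (cext f) = ⇑f := by
    funext z; exact cext_eq f z.2
  rw [this]; exact f.continuous

/-- The disc algebra as a subalgebra of `C(closedBall 0 1, ℂ)`. -/
def discAlg : Subalgebra ℂ C(closedBall (0:ℂ) 1, ℂ) where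
  carrier := {f | DifferentiableOn ℂ (cext f) (ball (0:ℂ) 1)}
  mul_mem' := by
    intro a b ha hb
    refine (ha.mul hb).congr fun z hz => ?_
    have hz' := ball_subset_closedBall hz
    simp [cext_eq _ hz']
  add_mem' := by
    intro a b ha hb
    refine (ha.add hb).congr fun z hz => ?_
    have hz' := ball_subset_closedBall hz
    simp [cext_eq _ hz']
  algebraMap_mem' := by
    intro c
    refine (differentiableOn_const c).congr fun z hz => ?_
    have hz' := ball_subset_closedBall hz
    simp [cext_eq _ hz']

lemma discAlg_isClosed : IsClosed (discAlg : Set C(closedBall (0:ℂ) 1, ℂ)) := by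
  rw [← isSeqClosed_iff_isClosed]
  intro u f hu huf
  have h1 : TendstoUniformlyOn (fun n z => cext (u n) z) (cext f) Filter.atTop
      (ball (0:ℂ) 1) := by
    rw [Metric.tendstoUniformlyOn_iff]
    intro ε hε
    have := (ContinuousMap.tendsto_iff_tendstoUniformly.mp huf)
    rw [Metric.tendstoUniformly_iff] at this
    filter_upwards [this ε hε] with n hn z hz
    have hz' := ball_subset_closedBall hz
    rw [cext_eq f hz', cext_eq (u n) hz']
    exact hn ⟨z, hz'⟩
  exact h1.tendstoLocallyUniformlyOn.differentiableOn
    (Filter.Eventually.of_forall fun n => hu n) isOpen_ball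

instance : NormedCommRing discAlg := inferInstance
instance : NormedAlgebra ℂ discAlg := inferInstance
instance : CompleteSpace discAlg := discAlg_isClosed.completeSpace_coe

instance : NormOneClass discAlg := by
  constructor
  show ‖((1 : discAlg) : C(closedBall (0:ℂ) 1, ℂ))‖ = 1
  rw [OneMemClass.coe_one]
  exact norm_one

/-- Promote a function on `ℂ` to a continuous map on the closed disc. -/
def toCM (f : ℂ → ℂ) (hf : ContinuousOn f (closedBall (0:ℂ) 1)) :
    C(closedBall (0:ℂ) 1, ℂ) :=
  ⟨(closedBall (0:ℂ) 1).restrict f, hf.restrict⟩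

lemma toCM_apply (f : ℂ → ℂ) (hf : ContinuousOn f (closedBall (0:ℂ) 1))
    (z : closedBall (0:ℂ) 1) : toCM f hf z = f z := rfl

lemma toCM_mem (f : ℂ → ℂ) (hf : ContinuousOn f (closedBall (0:ℂ) 1))
    (hd : DifferentiableOn ℂ f (ball (0:ℂ) 1)) : toCM f hf ∈ discAlg := by
  show DifferentiableOn ℂ (cext (toCM f hf)) (ball (0:ℂ) 1)
  refine hd.congr fun z hz => ?_
  have hz' := ball_subset_closedBall hz
  rw [cext_eq _ hz', toCM_apply]

end CoronaAux

noncomputable section CoronaChar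
open WeakDual

/-- The coordinate function as an element of the disc algebra. -/
def iotaA : discAlg :=
  ⟨toCM (fun z => z) continuous_id.continuousOn,
    toCM_mem _ _ differentiable_id.differentiableOn⟩

lemma norm_iotaA_le : ‖iotaA‖ ≤ 1 := by
  show ‖(iotaA : C(closedBall (0:ℂ) 1, ℂ))‖ ≤ 1
  rw [ContinuousMap.norm_le _ zero_le_one]
  intro x
  exact mem_closedBall_zero_iff.mp x.2

lemma char_dilation (φ : characterSpace ℂ discAlg) {F : ℂ → ℂ}
    (hc : ContinuousOn F (closedBall (0:ℂ) 1)) (hd : DifferentiableOn ℂ F (ball (0:ℂ) 1))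
    {r : ℝ} (hr0 : 0 < r) (hr1 : r < 1) {lam : ℂ} (hlam : lam = φ iotaA)
    (hl : ‖lam‖ ≤ 1) :
    ∃ FA : discAlg, (∀ z : closedBall (0:ℂ) 1, (FA : C(closedBall (0:ℂ) 1, ℂ)) z = F (r * z))
      ∧ φ FA = F (r * lam) := by
  have hrinv : 1 < r⁻¹ := (one_lt_inv₀ hr0).mpr hr1
  set Fr : ℂ → ℂ := fun z => F ((r : ℂ) * z) with hFr
  have hmaps : ∀ z : ℂ, z ∈ closedBall (0:ℂ) 1 → (r:ℂ) * z ∈ closedBall (0:ℂ) 1 := by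
    intro z hz
    rw [mem_closedBall_zero_iff] at hz ⊢
    calc ‖(r:ℂ) * z‖ = r * ‖z‖ := by
          rw [norm_mul, Complex.norm_real, Real.norm_of_nonneg hr0.le]
      _ ≤ 1 * 1 := by
          apply mul_le_mul hr1.le hz (norm_nonneg _) zero_le_one
      _ = 1 := one_mul 1
  have hmapsb : Set.MapsTo (fun z : ℂ => (r:ℂ) * z) (ball (0:ℂ) r⁻¹) (ball (0:ℂ) 1) := by
    intro z hz
    rw [mem_ball_zero_iff] at hz ⊢
    calc ‖(r:ℂ) * z‖ = r * ‖z‖ := by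
          rw [norm_mul, Complex.norm_real, Real.norm_of_nonneg hr0.le]
      _ < r * r⁻¹ := by exact mul_lt_mul_of_pos_left hz hr0
      _ = 1 := mul_inv_cancel₀ hr0.ne'
  have hcFr : ContinuousOn Fr (closedBall (0:ℂ) 1) := by
    apply hc.comp ((continuous_const.mul continuous_id).continuousOn) hmaps
  have hdFr : DifferentiableOn ℂ Fr (ball (0:ℂ) r⁻¹) :=
    hd.comp ((differentiable_const _).mul differentiable_id).differentiableOn hmapsb
  have hKsub : closedBall (0:ℂ) 1 ⊆ ball (0:ℂ) r⁻¹ := by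
    apply closedBall_subset_ball hrinv
  have hnhds : ball (0:ℂ) r⁻¹ ∈ nhds lam := by
    apply isOpen_ball.mem_nhds
    rw [mem_ball_zero_iff]
    exact lt_of_le_of_lt (by simpa using hl) hrinv
  have hH : DifferentiableOn ℂ (dslope Fr lam) (ball (0:ℂ) r⁻¹) :=
    (differentiableOn_dslope hnhds).mpr hdFr
  set FA : discAlg := ⟨toCM Fr hcFr, toCM_mem _ _ (hdFr.mono (ball_subset_ball hrinv.le))⟩
    with hFA
  set HA : discAlg := ⟨toCM (dslope Fr lam) (hH.continuousOn.mono hKsub),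
    toCM_mem _ _ (hH.mono (ball_subset_ball hrinv.le))⟩ with hHA
  have key : FA = Fr lam • (1 : discAlg) + (iotaA - lam • (1 : discAlg)) * HA := by
    apply Subtype.ext
    apply ContinuousMap.ext
    intro x
    have hds := sub_smul_dslope Fr lam x
    rw [smul_eq_mul] at hds
    simp only [Subalgebra.coe_add, MulMemClass.coe_mul, SetLike.val_smul,
      OneMemClass.coe_one, AddSubgroupClass.coe_sub, ContinuousMap.add_apply,
      ContinuousMap.mul_apply, ContinuousMap.sub_apply, ContinuousMap.smul_apply,
      ContinuousMap.one_apply, smul_eq_mul, mul_one]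
    show Fr ↑x = _
    rw [show (iotaA : C(closedBall (0:ℂ) 1, ℂ)) x = (x:ℂ) from rfl,
        show (HA : C(closedBall (0:ℂ) 1, ℂ)) x = dslope Fr lam x from rfl]
    linear_combination -hds
  refine ⟨FA, fun z => rfl, ?_⟩
  rw [key]
  rw [map_add, map_smul, map_one, map_mul, map_sub, map_smul, map_one, ← hlam]
  simp [Fr]

lemma discAlg_norm_le {a : discAlg} {C : ℝ} (hC : 0 ≤ C)
    (h : ∀ x : closedBall (0:ℂ) 1, ‖(a : C(closedBall (0:ℂ) 1, ℂ)) x‖ ≤ C) : ‖a‖ ≤ C := by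
  show ‖(a : C(closedBall (0:ℂ) 1, ℂ))‖ ≤ C
  rw [ContinuousMap.norm_le _ hC]
  exact h

lemma span_top (f g : ℂ → ℂ) (hf : IsRDisc f) (hg : IsRDisc g) (δ : ℝ) (hδ : 0 < δ)
    (hb : ∀ z ∈ closedBall (0:ℂ) 1, δ ≤ ‖f z‖ + ‖g z‖) :
    ∃ a b : discAlg,
      (a : C(closedBall (0:ℂ) 1, ℂ)) * toCM f hf.1 + (b : C(closedBall (0:ℂ) 1, ℂ)) * toCM g hg.1
        = 1 := by
  set fA : discAlg := ⟨toCM f hf.1, toCM_mem f hf.1 hf.2.1⟩ with hfA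
  set gA : discAlg := ⟨toCM g hg.1, toCM_mem g hg.1 hg.2.1⟩ with hgA
  have htop : Ideal.span ({fA, gA} : Set discAlg) = ⊤ := by
    by_contra hne
    obtain ⟨M, hM, hle⟩ := Ideal.exists_le_maximal _ hne
    set φ := M.toCharacterSpace with hφ
    have hφf : φ fA = 0 := M.toCharacterSpace_apply_eq_zero_of_mem
      (hle (Ideal.subset_span (by simp)))
    have hφg : φ gA = 0 := M.toCharacterSpace_apply_eq_zero_of_mem
      (hle (Ideal.subset_span (by simp)))
    set lam : ℂ := φ iotaA with hlam
    have hl : ‖lam‖ ≤ 1 := by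
      have h1 : ‖φ iotaA‖ ≤ ‖iotaA‖ := AlgHom.norm_apply_le_self φ iotaA
      exact h1.trans norm_iotaA_le
    -- uniform continuity
    have hucf := (isCompact_closedBall (0:ℂ) 1).uniformContinuousOn_of_continuous hf.1
    have hucg := (isCompact_closedBall (0:ℂ) 1).uniformContinuousOn_of_continuous hg.1
    rw [Metric.uniformContinuousOn_iff] at hucf hucg
    obtain ⟨ηf, hηf, huf⟩ := hucf (δ/3) (by linarith)
    obtain ⟨ηg, hηg, hug⟩ := hucg (δ/3) (by linarith)
    set η := min ηf ηg with hη
    have hηpos : 0 < η := lt_min hηf hηg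
    set r : ℝ := max (1 - η/2) (1/2) with hr
    have hr0 : 0 < r := lt_of_lt_of_le one_half_pos (le_max_right _ _)
    have hr1 : r < 1 := by
      apply max_lt (by linarith) (by norm_num)
    have hrdist : ∀ z ∈ closedBall (0:ℂ) 1, dist ((r:ℂ) * z) z < η := by
      intro z hz
      rw [mem_closedBall_zero_iff] at hz
      have : dist ((r:ℂ) * z) z = (1 - r) * ‖z‖ := by
        rw [dist_eq_norm]
        have : (r:ℂ) * z - z = -((1 - (r:ℂ)) * z) := by ring
        rw [this, norm_neg, norm_mul]
        congr 1
        rw [show (1 - (r:ℂ)) = ((1 - r : ℝ) : ℂ) by push_cast; ring, Complex.norm_real,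
          Real.norm_of_nonneg (by linarith)]
      rw [this]
      have h1r : 1 - η/2 ≤ r := le_max_left _ _
      calc (1 - r) * ‖z‖ ≤ (η/2) * 1 := by
            apply mul_le_mul (by linarith) hz (norm_nonneg _) (by linarith)
        _ < η := by linarith
    have hrz : ∀ z ∈ closedBall (0:ℂ) 1, (r:ℂ) * z ∈ closedBall (0:ℂ) 1 := by
      intro z hz
      rw [mem_closedBall_zero_iff] at hz ⊢
      calc ‖(r:ℂ) * z‖ = r * ‖z‖ := by
            rw [norm_mul, Complex.norm_real, Real.norm_of_nonneg hr0.le]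
        _ ≤ 1 * 1 := mul_le_mul hr1.le hz (norm_nonneg _) zero_le_one
        _ = 1 := one_mul 1
    obtain ⟨FA, hFAval, hFAφ⟩ := char_dilation φ hf.1 hf.2.1 hr0 hr1 hlam hl
    obtain ⟨GA, hGAval, hGAφ⟩ := char_dilation φ hg.1 hg.2.1 hr0 hr1 hlam hl
    have hlamK : lam ∈ closedBall (0:ℂ) 1 := by
      rw [mem_closedBall_zero_iff]; simpa using hl
    -- bound ‖FA - fA‖
    have hFAb : ‖FA - fA‖ ≤ δ/3 := by
      apply discAlg_norm_le (by linarith)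
      intro x
      rw [AddSubgroupClass.coe_sub, ContinuousMap.sub_apply, hFAval]
      have : toCM f hf.1 x = f x := rfl
      rw [this]
      rw [← dist_eq_norm]
      exact le_of_lt (huf _ (hrz _ x.2) _ x.2
        (lt_of_lt_of_le (hrdist _ x.2) (min_le_left _ _)))
    have hGAb : ‖GA - gA‖ ≤ δ/3 := by
      apply discAlg_norm_le (by linarith)
      intro x
      rw [AddSubgroupClass.coe_sub, ContinuousMap.sub_apply, hGAval]
      have : toCM g hg.1 x = g x := rfl
      rw [this]
      rw [← dist_eq_norm]
      exact le_of_lt (hug _ (hrz _ x.2) _ x.2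
        (lt_of_lt_of_le (hrdist _ x.2) (min_le_right _ _)))
    have hfval : ‖f ((r:ℂ) * lam)‖ ≤ δ/3 := by
      have heq : f ((r:ℂ) * lam) = φ (FA - fA) := by
        rw [map_sub, hφf, sub_zero, hFAφ]
      rw [heq]
      exact (AlgHom.norm_apply_le_self φ (FA - fA)).trans hFAb
    have hgval : ‖g ((r:ℂ) * lam)‖ ≤ δ/3 := by
      have heq : g ((r:ℂ) * lam) = φ (GA - gA) := by
        rw [map_sub, hφg, sub_zero, hGAφ]
      rw [heq]
      exact (AlgHom.norm_apply_le_self φ (GA - gA)).trans hGAb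
    have := hb _ (hrz _ hlamK)
    linarith
  have h1 : (1 : discAlg) ∈ Ideal.span ({fA, gA} : Set discAlg) := Ideal.eq_top_iff_one _ |>.mp htop
  rw [Ideal.mem_span_pair] at h1
  obtain ⟨a, b, hab⟩ := h1
  refine ⟨a, b, ?_⟩
  have := congrArg (Subtype.val) hab
  simpa using this

end CoronaChar

section CoronaFinal

lemma conj_mem_closedBall {z : ℂ} (hz : z ∈ closedBall (0:ℂ) 1) :
    (conj z : ℂ) ∈ closedBall (0:ℂ) 1 := by
  rwa [mem_closedBall_zero_iff, RCLike.norm_conj, ← mem_closedBall_zero_iff]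

lemma differentiableOn_conj_conj {F : ℂ → ℂ} (h : DifferentiableOn ℂ F (ball (0:ℂ) 1)) :
    DifferentiableOn ℂ (fun z => conj (F (conj z))) (ball (0:ℂ) 1) := by
  intro z hz
  have hz' : (conj z : ℂ) ∈ ball (0:ℂ) 1 := by
    rwa [mem_ball_zero_iff, RCLike.norm_conj, ← mem_ball_zero_iff]
  have hd : DifferentiableAt ℂ F (conj z) :=
    h.differentiableAt (isOpen_ball.mem_nhds hz')
  have hD : HasDerivAt F (deriv F (conj z)) (conj z) := hd.hasDerivAt
  have hgoal : HasDerivAt (fun w => (conj (F (conj w)) : ℂ)) (conj (deriv F (conj z))) z := by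
    rw [hasDerivAt_iff_tendsto_slope] at hD ⊢
    have hconj : Filter.Tendsto (fun w : ℂ => (conj w : ℂ)) (nhdsWithin z {z}ᶜ)
        (nhdsWithin (conj z) {(conj z : ℂ)}ᶜ) := by
      rw [tendsto_nhdsWithin_iff]
      constructor
      · exact (Complex.continuous_conj.tendsto z).mono_left nhdsWithin_le_nhds
      · filter_upwards [self_mem_nhdsWithin] with w hw
        simp only [Set.mem_compl_iff, Set.mem_singleton_iff] at hw ⊢
        intro hcontra
        exact hw (by simpa using congrArg (starRingEnd ℂ) hcontra)
    have hcomp := (Complex.continuous_conj.tendsto _).comp (hD.comp hconj)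
    refine hcomp.congr fun w => ?_
    simp only [Function.comp_apply, slope_def_field, map_div₀, map_sub, Complex.conj_conj]
  exact hgoal.differentiableAt.differentiableWithinAt

end CoronaFinal

theorem invertible_pair_iff_corona (f g : ℂ → ℂ) (hf : IsRDisc f) (hg : IsRDisc g) :
    BezoutPair f g ↔
      ∃ δ : ℝ, 0 < δ ∧
        ∀ z ∈ closedBall (0 : ℂ) 1, δ ≤ ‖f z‖ + ‖g z‖ := by
  constructor
  · rintro ⟨α, β, hα, hβ, heq⟩
    obtain ⟨Cα, hCα⟩ := (isCompact_closedBall (0:ℂ) 1).exists_bound_of_continuousOn hα.1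
    obtain ⟨Cβ, hCβ⟩ := (isCompact_closedBall (0:ℂ) 1).exists_bound_of_continuousOn hβ.1
    set C := max Cα Cβ + 1 with hC
    have hC0 : 0 < C := by
      have h0 := (norm_nonneg (α 0)).trans (hCα 0 (mem_closedBall_self zero_le_one))
      have h1 := le_max_left Cα Cβ
      linarith
    refine ⟨C⁻¹, inv_pos.mpr hC0, ?_⟩
    intro z hz
    have hAz : ‖α z‖ ≤ C := by
      have := hCα z hz
      have h1 := le_max_left Cα Cβ
      linarith
    have hBz : ‖β z‖ ≤ C := by
      have := hCβ z hz
      have h1 := le_max_right Cα Cβ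
      linarith
    have habs : (1:ℝ) ≤ C * (‖f z‖ + ‖g z‖) := by
      have h1 : ‖α z * f z + β z * g z‖ = 1 := by rw [heq z hz]; simp
      calc (1:ℝ) = ‖α z * f z + β z * g z‖ := h1.symm
        _ ≤ ‖α z * f z‖ + ‖β z * g z‖ := norm_add_le _ _
        _ = ‖α z‖ * ‖f z‖ + ‖β z‖ * ‖g z‖ := by
            rw [norm_mul, norm_mul]
        _ ≤ C * ‖f z‖ + C * ‖g z‖ :=
            add_le_add (mul_le_mul_of_nonneg_right hAz (norm_nonneg _))
              (mul_le_mul_of_nonneg_right hBz (norm_nonneg _))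
        _ = C * (‖f z‖ + ‖g z‖) := by ring
    calc C⁻¹ = C⁻¹ * 1 := (mul_one _).symm
      _ ≤ C⁻¹ * (C * (‖f z‖ + ‖g z‖)) :=
          mul_le_mul_of_nonneg_left habs (inv_nonneg.mpr hC0.le)
      _ = ‖f z‖ + ‖g z‖ := by
          rw [← mul_assoc, inv_mul_cancel₀ hC0.ne', one_mul]
  · rintro ⟨δ, hδ, hb⟩
    obtain ⟨a, b, hab⟩ := span_top f g hf hg δ hδ hb
    set α₀ : ℂ → ℂ := cext (a : C(closedBall (0:ℂ) 1, ℂ)) with hα₀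
    set β₀ : ℂ → ℂ := cext (b : C(closedBall (0:ℂ) 1, ℂ)) with hβ₀
    have hα₀c : ContinuousOn α₀ (closedBall (0:ℂ) 1) := continuousOn_cext _
    have hβ₀c : ContinuousOn β₀ (closedBall (0:ℂ) 1) := continuousOn_cext _
    have hα₀d : DifferentiableOn ℂ α₀ (ball (0:ℂ) 1) := a.2
    have hβ₀d : DifferentiableOn ℂ β₀ (ball (0:ℂ) 1) := b.2
    have hmapsconj : Set.MapsTo (fun z : ℂ => (conj z : ℂ)) (closedBall (0:ℂ) 1)
        (closedBall (0:ℂ) 1) := fun z hz => conj_mem_closedBall hz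
    have hbase : ∀ z ∈ closedBall (0:ℂ) 1, α₀ z * f z + β₀ z * g z = 1 := by
      intro z hz
      have h := ContinuousMap.congr_fun hab ⟨z, hz⟩
      rw [hα₀, hβ₀, cext_eq _ hz, cext_eq _ hz]
      simpa [ContinuousMap.add_apply, ContinuousMap.mul_apply, toCM_apply] using h
    refine ⟨fun z => (α₀ z + conj (α₀ (conj z)))/2, fun z => (β₀ z + conj (β₀ (conj z)))/2,
      ⟨?_, ?_, ?_⟩, ⟨?_, ?_, ?_⟩, ?_⟩
    · exact (hα₀c.add (Complex.continuous_conj.comp_continuousOn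
        (hα₀c.comp Complex.continuous_conj.continuousOn hmapsconj))).div_const 2
    · exact (hα₀d.add (differentiableOn_conj_conj hα₀d)).div_const 2
    · intro z hz
      simp only [map_div₀, map_add, Complex.conj_conj, map_ofNat]
      ring
    · exact (hβ₀c.add (Complex.continuous_conj.comp_continuousOn
        (hβ₀c.comp Complex.continuous_conj.continuousOn hmapsconj))).div_const 2
    · exact (hβ₀d.add (differentiableOn_conj_conj hβ₀d)).div_const 2
    · intro z hz
      simp only [map_div₀, map_add, Complex.conj_conj, map_ofNat]
      ring
    · intro z hz
      have hz' := conj_mem_closedBall hz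
      have h1 := hbase z hz
      have h2 := hbase _ hz'
      have hfz : f (conj z) = conj (f z) := by
        have := hf.2.2 (conj z) hz'
        simpa [Complex.conj_conj] using this
      have hgz : g (conj z) = conj (g z) := by
        have := hg.2.2 (conj z) hz'
        simpa [Complex.conj_conj] using this
      have h3 := congrArg (starRingEnd ℂ) h2
      simp only [map_add, map_mul, map_one, hfz, hgz, Complex.conj_conj] at h3
      linear_combination h1/2 + h3/2
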